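/- arXiv:2006.07888 — 2 statements merged into one kernel-verified Lean document; each statement's English description precedes it below -/
import Mathlib

section
/- Let Y ⊆ ℂ^p be a nonempty open set. Suppose that for every n ≥ 1 and every special polyhedral pair K ⊆ L in ℂ^n (i.e., L is a compact convex polyhedron, the intersection of finitely many closed real affine half-spaces of ℂ^n ≅ ℝ^{2n}, and K = {z ∈ L : λ(z) ≤ 0} for some real affine function λ : ℂ^n → ℝ), every holomorphic map from an open neighbourhood of K with values in Y can be approximated uniformly on K by holomorphic maps defined on open neighbourhoods of L with values in Y. Then Y satisfies the convex approximation property (CAP). -/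
open Set

noncomputable section

abbrev ESp (n : ℕ) := EuclideanSpace ℂ (Fin n)

/-- The convex approximation property for an open set `Y ⊆ ℂ^p`. -/
def CAP {p : ℕ} (Y : Set (ESp p)) : Prop :=
  ∀ (m : ℕ), 1 ≤ m → ∀ L : Set (ESp m), IsCompact L → Convex ℝ L →
    ∀ U : Set (ESp m), IsOpen U → L ⊆ U →
      ∀ f : ESp m → ESp p, DifferentiableOn ℂ f U → f '' U ⊆ Y →
        ∀ ε : ℝ, 0 < ε →
          ∃ F : ESp m → ESp p, Differentiable ℂ F ∧ Set.range F ⊆ Y ∧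
            ∀ z ∈ L, ‖F z - f z‖ < ε


open Metric Filter Topology

/-! ### Auxiliary definitions -/

def coordRe (m : ℕ) (i : Fin m) : ESp m →L[ℝ] ℝ :=
  Complex.reCLM.comp ((EuclideanSpace.proj i : ESp m →L[ℂ] ℂ).restrictScalars ℝ)

def coordIm (m : ℕ) (i : Fin m) : ESp m →L[ℝ] ℝ :=
  Complex.imCLM.comp ((EuclideanSpace.proj i : ESp m →L[ℂ] ℂ).restrictScalars ℝ)

def boxFun (m : ℕ) : Fin (4*m) → (ESp m →L[ℝ] ℝ) := fun i =>
  let q := finProdFinEquiv.symm i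
  ![coordRe m q.2, -coordRe m q.2, coordIm m q.2, -coordIm m q.2] q.1

def Qb (m : ℕ) (r : ℝ) : Set (ESp m) := {z : ESp m | ∀ i, boxFun m i z ≤ r}

/-- The hypothesis of the main theorem, instantiated at dimension `m`. -/
def HA (m p : ℕ) (Y : Set (ESp p)) : Prop :=
  ∀ (k : ℕ) (φ : Fin k → (ESp m →L[ℝ] ℝ)) (c : Fin k → ℝ),
      IsCompact {z : ESp m | ∀ i, φ i z ≤ c i} →
      ∀ (ψ : ESp m →L[ℝ] ℝ) (d : ℝ),
        ∀ U : Set (ESp m), IsOpen U → {z : ESp m | (∀ i, φ i z ≤ c i) ∧ ψ z + d ≤ 0} ⊆ U →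
          ∀ f : ESp m → ESp p, DifferentiableOn ℂ f U → f '' U ⊆ Y →
            ∀ ε : ℝ, 0 < ε →
              ∃ (W : Set (ESp m)) (g : ESp m → ESp p),
                IsOpen W ∧ {z : ESp m | ∀ i, φ i z ≤ c i} ⊆ W ∧
                DifferentiableOn ℂ g W ∧ g '' W ⊆ Y ∧
                ∀ z ∈ {z : ESp m | (∀ i, φ i z ≤ c i) ∧ ψ z + d ≤ 0}, ‖g z - f z‖ < ε

/-! ### Box lemmas -/

lemma boxFun_le_iff {m : ℕ} (z : ESp m) (r : ℝ) :
    (∀ i, boxFun m i z ≤ r) ↔ ∀ j : Fin m, |(z j).re| ≤ r ∧ |(z j).im| ≤ r := by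
  constructor
  · intro h j
    have h0 := h (finProdFinEquiv (0, j))
    have h1 := h (finProdFinEquiv (1, j))
    have h2 := h (finProdFinEquiv (2, j))
    have h3 := h (finProdFinEquiv (3, j))
    simp only [boxFun, Equiv.symm_apply_apply] at h0 h1 h2 h3
    simp only [Matrix.cons_val_zero, Matrix.cons_val_one, Matrix.head_cons] at h0 h1 h2 h3
    simp only [coordRe, coordIm, ContinuousLinearMap.neg_apply,
      ContinuousLinearMap.comp_apply] at h0 h1 h2 h3
    constructor <;> rw [abs_le] <;> constructor <;> simp_all <;> linarith
  · intro h i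
    have key : ∀ (a : Fin 4) (j : Fin m),
        (![coordRe m j, -coordRe m j, coordIm m j, -coordIm m j] a) z ≤ r := by
      intro a j
      have h1 := abs_le.mp (h j).1
      have h2 := abs_le.mp (h j).2
      fin_cases a <;> simp [coordRe, coordIm] <;> linarith
    simpa only [boxFun] using key (finProdFinEquiv.symm i).1 (finProdFinEquiv.symm i).2

lemma coord_le_norm {m : ℕ} (z : ESp m) (j : Fin m) : ‖z j‖ ≤ ‖z‖ := by
  rw [EuclideanSpace.norm_eq]
  have h1 : ‖z j‖ = Real.sqrt (‖z j‖^2) := (Real.sqrt_sq (norm_nonneg _)).symm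
  rw [h1]
  refine Real.sqrt_le_sqrt ?_
  exact Finset.single_le_sum (f := fun i => ‖z i‖^2) (fun i _ => sq_nonneg _) (Finset.mem_univ j)

lemma boxFun_le_norm {m : ℕ} (z : ESp m) (i : Fin (4*m)) : boxFun m i z ≤ ‖z‖ := by
  have key : ∀ (a : Fin 4) (j : Fin m),
      (![coordRe m j, -coordRe m j, coordIm m j, -coordIm m j] a) z ≤ ‖z‖ := by
    intro a j
    have h1 : |(z j).re| ≤ ‖z j‖ := Complex.abs_re_le_norm _
    have h2 : |(z j).im| ≤ ‖z j‖ := Complex.abs_im_le_norm _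
    have h3 := coord_le_norm z j
    have h4 := le_abs_self (z j).re
    have h5 := neg_abs_le (z j).re
    have h6 := le_abs_self (z j).im
    have h7 := neg_abs_le (z j).im
    fin_cases a <;> simp [coordRe, coordIm] <;> linarith
  simpa only [boxFun] using key (finProdFinEquiv.symm i).1 (finProdFinEquiv.symm i).2

lemma isClosed_poly {n k : ℕ} (φ : Fin k → (ESp n →L[ℝ] ℝ)) (c : Fin k → ℝ) :
    IsClosed {z : ESp n | ∀ i, φ i z ≤ c i} := by
  have : {z : ESp n | ∀ i, φ i z ≤ c i} = ⋂ i, (φ i) ⁻¹' Iic (c i) := by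
    ext z; simp [Set.mem_iInter]
  rw [this]
  exact isClosed_iInter fun i => isClosed_Iic.preimage (φ i).continuous

lemma isCompact_Qb (m : ℕ) (r : ℝ) : IsCompact (Qb m r) := by
  have hcl : IsClosed (Qb m r) := isClosed_poly (boxFun m) (fun _ => r)
  refine IsCompact.of_isClosed_subset
    (isCompact_closedBall (0 : ESp m) (Real.sqrt (m * (2*r)^2))) hcl ?_
  intro z hz
  rw [Qb, mem_setOf_eq, boxFun_le_iff] at hz
  have hb : ∀ j : Fin m, ‖z j‖ ≤ 2 * r := by
    intro j
    calc ‖z j‖ ≤ |(z j).re| + |(z j).im| := Complex.norm_le_abs_re_add_abs_im _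
    _ ≤ 2 * r := by have := (hz j).1; have := (hz j).2; linarith
  rw [mem_closedBall, dist_zero_right, EuclideanSpace.norm_eq]
  refine Real.sqrt_le_sqrt ?_
  calc ∑ j, ‖z j‖^2 ≤ ∑ _j : Fin m, (2*r)^2 := by
        refine Finset.sum_le_sum fun j _ => ?_
        have h0 : (0:ℝ) ≤ ‖z j‖ := norm_nonneg _
        nlinarith [hb j]
  _ = m * (2*r)^2 := by simp [Finset.sum_const, mul_comm]

lemma Qb_mono {m : ℕ} {r r' : ℝ} (h : r ≤ r') : Qb m r ⊆ Qb m r' :=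
  fun _z hz i => (hz i).trans h

/-! ### Lemma A: enlarging the domain across polyhedral constraints -/

lemma forall_append_le_iff {K k n : ℕ} (Φ : Fin K → (ESp n →L[ℝ] ℝ)) (C : Fin K → ℝ)
    (φ : Fin k → (ESp n →L[ℝ] ℝ)) (c : Fin k → ℝ) (z : ESp n) :
    (∀ i, Fin.append Φ φ i z ≤ Fin.append C c i) ↔ (∀ i, Φ i z ≤ C i) ∧ (∀ i, φ i z ≤ c i) := by
  constructor
  · intro h
    exact ⟨fun i => by simpa [Fin.append_left] using h (Fin.castAdd k i),
      fun i => by simpa [Fin.append_right] using h (Fin.natAdd K i)⟩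
  · rintro ⟨h1, h2⟩ i
    refine Fin.addCases (fun i => ?_) (fun i => ?_) i <;>
      simp [Fin.append_left, Fin.append_right, h1, h2]

lemma lemA {p : ℕ} {Y : Set (ESp p)} {n : ℕ} (H : HA n p Y) :
    ∀ (k : ℕ) (K : ℕ) (Φ : Fin K → (ESp n →L[ℝ] ℝ)) (C : Fin K → ℝ)
      (φ : Fin k → (ESp n →L[ℝ] ℝ)) (c : Fin k → ℝ),
      IsCompact {z : ESp n | ∀ i, Φ i z ≤ C i} →
      ∀ W : Set (ESp n), IsOpen W →
        {z : ESp n | (∀ i, Φ i z ≤ C i) ∧ ∀ i, φ i z ≤ c i} ⊆ W →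
        ∀ g : ESp n → ESp p, DifferentiableOn ℂ g W → g '' W ⊆ Y →
        ∀ ε : ℝ, 0 < ε →
          ∃ (W' : Set (ESp n)) (g' : ESp n → ESp p),
            IsOpen W' ∧ {z : ESp n | ∀ i, Φ i z ≤ C i} ⊆ W' ∧
            DifferentiableOn ℂ g' W' ∧ g' '' W' ⊆ Y ∧
            ∀ z, (∀ i, Φ i z ≤ C i) → (∀ i, φ i z ≤ c i) → ‖g' z - g z‖ < ε := by
  intro k
  induction k with
  | zero =>
    intro K Φ C φ c hcomp W hWo hsub g hg hgY ε hε
    exact ⟨W, g, hWo, fun z hz => hsub ⟨hz, fun i => i.elim0⟩, hg, hgY,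
      fun z _ _ => by simpa using hε⟩
  | succ k IH =>
    intro K Φ C φ c hcomp W hWo hsub g hg hgY ε hε
    set φ' : Fin k → (ESp n →L[ℝ] ℝ) := fun i => φ i.castSucc with hφ'
    set c' : Fin k → ℝ := fun i => c i.castSucc with hc'
    have hsplit : ∀ z : ESp n, (∀ i, φ i z ≤ c i) ↔
        (∀ i, φ' i z ≤ c' i) ∧ φ (Fin.last k) z ≤ c (Fin.last k) := by
      intro z
      constructor
      · intro h; exact ⟨fun i => h _, h _⟩
      · rintro ⟨h1, h2⟩ i
        refine Fin.lastCases h2 (fun i => h1 i) i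
    have hPcomp : IsCompact {z : ESp n |
        ∀ i, Fin.append Φ φ' i z ≤ Fin.append C c' i} := by
      have heq : {z : ESp n | ∀ i, Fin.append Φ φ' i z ≤ Fin.append C c' i}
          = {z : ESp n | ∀ i, Φ i z ≤ C i} ∩ {z : ESp n | ∀ i, φ' i z ≤ c' i} := by
        ext z; simp [forall_append_le_iff, Set.mem_inter_iff]
      rw [heq]
      exact hcomp.inter_right (isClosed_poly φ' c')
    obtain ⟨W₁, g₁, hW₁o, hW₁sub, hg₁, hg₁Y, herr₁⟩ :=
      H (K + k) (Fin.append Φ φ') (Fin.append C c') hPcomp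
        (φ (Fin.last k)) (-(c (Fin.last k))) W hWo
        (by
          intro z hz
          rcases hz with ⟨h1, h2⟩
          rw [forall_append_le_iff] at h1
          refine hsub ⟨h1.1, (hsplit z).mpr ⟨h1.2, by linarith⟩⟩)
        g hg hgY (ε/2) (by linarith)
    obtain ⟨W', g', hW'o, hW'sub, hg', hg'Y, herr₂⟩ :=
      IH K Φ C φ' c' hcomp W₁ hW₁o
        (by intro z hz; exact hW₁sub ((forall_append_le_iff Φ C φ' c' z).mpr ⟨hz.1, hz.2⟩))
        g₁ hg₁ hg₁Y (ε/2) (by linarith)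
    refine ⟨W', g', hW'o, hW'sub, hg', hg'Y, fun z h1 h2 => ?_⟩
    have h2' := (hsplit z).mp h2
    have e1 : ‖g₁ z - g z‖ < ε/2 :=
      herr₁ z ⟨(forall_append_le_iff Φ C φ' c' z).mpr ⟨h1, h2'.1⟩, by linarith [h2'.2]⟩
    have e2 : ‖g' z - g₁ z‖ < ε/2 := herr₂ z h1 h2'.1
    calc ‖g' z - g z‖ ≤ ‖g' z - g₁ z‖ + ‖g₁ z - g z‖ := norm_sub_le_norm_sub_add_norm_sub _ _ _
      _ < ε := by linarith

/-! ### Cauchy estimate and uniform limits -/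

lemma fderiv_norm_le_of_bound {m p : ℕ} {V : Set (ESp m)} (hV : IsOpen V)
    {h : ESp m → ESp p} (hd : DifferentiableOn ℂ h V) {z : ESp m} {ρ M : ℝ}
    (hρ : 0 < ρ) (hball : closedBall z ρ ⊆ V) (hM : ∀ w ∈ closedBall z ρ, ‖h w‖ ≤ M) :
    ‖fderiv ℂ h z‖ ≤ M / ρ := by
  have hz : z ∈ V := hball (mem_closedBall_self hρ.le)
  have hM0 : 0 ≤ M := (norm_nonneg _).trans (hM z (mem_closedBall_self hρ.le))
  refine ContinuousLinearMap.opNorm_le_bound _ (div_nonneg hM0 hρ.le) fun v => ?_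
  rcases eq_or_ne v 0 with rfl | hv
  · simp
  have hvn : 0 < ‖v‖ := norm_pos_iff.mpr hv
  set A : ℂ → ESp m := fun t => z + t • v with hA
  have hAc : Continuous A := continuous_const.add (continuous_id.smul continuous_const)
  set T : Set ℂ := A ⁻¹' V with hT
  have hTo : IsOpen T := hV.preimage hAc
  set u : ℂ → ESp p := h ∘ A with hu
  have hud : DifferentiableOn ℂ u T := by
    refine DifferentiableOn.comp hd ?_ (fun t ht => ht)
    intro t _
    exact (((differentiable_id.smul_const v) t).const_add z).differentiableWithinAt
  have hA0 : A 0 = z := by simp [hA]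
  have hderiv : HasDerivAt A v 0 := by
    have h1 : HasDerivAt (fun t : ℂ => t • v) ((1:ℂ) • v) 0 := (hasDerivAt_id 0).smul_const v
    have h2 := h1.const_add z
    simp only [one_smul] at h2
    exact h2
  have hfd : DifferentiableAt ℂ h z := hd.differentiableAt (hV.mem_nhds hz)
  have hcomp : HasDerivAt u (fderiv ℂ h z v) 0 := by
    have hfd' : HasFDerivAt h (fderiv ℂ h z) (A 0) := by rw [hA0]; exact hfd.hasFDerivAt
    simpa using hfd'.comp_hasDerivAt 0 hderiv
  set r : ℝ := ρ / ‖v‖ with hr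
  have hrpos : 0 < r := div_pos hρ hvn
  have hmem : ∀ t : ℂ, ‖t‖ ≤ r → A t ∈ closedBall z ρ := by
    intro t ht
    simp only [mem_closedBall, hA]
    rw [dist_eq_norm]
    have : ‖z + t • v - z‖ = ‖t‖ * ‖v‖ := by rw [add_sub_cancel_left, norm_smul]
    rw [this]
    calc ‖t‖ * ‖v‖ ≤ r * ‖v‖ := by gcongr
      _ = ρ := by rw [hr, div_mul_cancel₀ _ hvn.ne']
  have hcb : closedBall (0:ℂ) r ⊆ T := by
    intro t ht
    simp only [mem_closedBall, dist_zero_right] at ht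
    exact hball (hmem t ht)
  have hcd : Complex.cderiv r u 0 = deriv u 0 := Complex.cderiv_eq_deriv hTo hud hrpos hcb
  have hbound : ‖Complex.cderiv r u 0‖ ≤ M / r := by
    refine Complex.norm_cderiv_le hrpos fun w hw => ?_
    have hwr : ‖w‖ ≤ r := by
      simp only [mem_sphere_iff_norm, sub_zero] at hw
      exact hw.le
    exact hM _ (hmem w hwr)
  have : ‖fderiv ℂ h z v‖ ≤ M / r := by
    rw [← hcomp.deriv, ← hcd]
    exact hbound
  calc ‖fderiv ℂ h z v‖ ≤ M / r := this
    _ = M / ρ * ‖v‖ := by rw [hr]; field_simp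

lemma differentiableAt_of_uniform_limit {m p : ℕ} {V : Set (ESp m)} (hV : IsOpen V)
    {g : ℕ → ESp m → ESp p} {F : ESp m → ESp p}
    (hd : ∀ k, DifferentiableOn ℂ (g k) V)
    (hF : TendstoUniformlyOn g F atTop V)
    {z₀ : ESp m} {r : ℝ} (hr : 0 < r) (hball : closedBall z₀ (2*r) ⊆ V) :
    DifferentiableAt ℂ F z₀ := by
  have hsub : ball z₀ r ⊆ V := fun x hx => hball (by
    simp only [mem_closedBall, mem_ball] at *
    linarith)
  set f' : ℕ → ESp m → (ESp m →L[ℂ] ESp p) := fun k z => fderiv ℂ (g k) z with hf'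
  have hcauchy : UniformCauchySeqOn f' atTop (ball z₀ r) := by
    rw [Metric.uniformCauchySeqOn_iff]
    intro ε hε
    have hgc := hF.uniformCauchySeqOn
    rw [Metric.uniformCauchySeqOn_iff] at hgc
    obtain ⟨N, hN⟩ := hgc (ε * r / 2) (by positivity)
    refine ⟨N, fun j hj k hk z hz => ?_⟩
    have hzV : closedBall z r ⊆ V := by
      intro w hw
      refine hball ?_
      simp only [mem_closedBall, mem_ball] at *
      have := dist_triangle w z z₀
      linarith
    have hdiff : DifferentiableOn ℂ (g j - g k) V := (hd j).sub (hd k)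
    have hMb : ∀ w ∈ closedBall z r, ‖(g j - g k) w‖ ≤ ε * r / 2 := by
      intro w hw
      have := hN j hj k hk w (hzV hw)
      rw [dist_eq_norm] at this
      exact this.le
    have hop := fderiv_norm_le_of_bound hV hdiff hr hzV hMb
    have hzV' : z ∈ V := hsub hz
    have heq : fderiv ℂ (g j - g k) z = f' j z - f' k z := by
      rw [hf']
      exact fderiv_sub ((hd j).differentiableAt (hV.mem_nhds hzV'))
        ((hd k).differentiableAt (hV.mem_nhds hzV'))
    rw [dist_eq_norm, ← heq]
    calc ‖fderiv ℂ (g j - g k) z‖ ≤ (ε * r / 2) / r := hop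
      _ = ε / 2 := by field_simp
      _ < ε := by linarith
  have hptlim : ∀ z, z ∈ ball z₀ r → ∃ l, Tendsto (fun k => f' k z) atTop (𝓝 l) :=
    fun z hz => cauchySeq_tendsto_of_complete (hcauchy.cauchySeq hz)
  classical
  set G : ESp m → (ESp m →L[ℂ] ESp p) := fun z =>
    if hz : z ∈ ball z₀ r then Classical.choose (hptlim z hz) else 0 with hG
  have hGlim : ∀ z ∈ ball z₀ r, Tendsto (fun k => f' k z) atTop (𝓝 (G z)) := by
    intro z hz
    rw [hG]
    simp only [dif_pos hz]
    exact Classical.choose_spec (hptlim z hz)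
  have hGuc : TendstoUniformlyOn f' G atTop (ball z₀ r) :=
    hcauchy.tendstoUniformlyOn_of_tendsto hGlim
  have hmain : HasFDerivAt F (G z₀) z₀ := by
    refine hasFDerivAt_of_tendstoUniformlyOn isOpen_ball hGuc
      (fun n x hx => ((hd n).differentiableAt (hV.mem_nhds (hsub hx))).hasFDerivAt)
      (fun x hx => hF.tendsto_at (hsub hx)) (mem_ball_self hr)
  exact hmain.differentiableAt

/-! ### Polyhedron between a convex compact and an open set -/

lemma mem_cthick_iff {m : ℕ} {s : Set (ESp m)} (hne : s.Nonempty) {δ : ℝ} (hδ : 0 ≤ δ)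
    {x : ESp m} : x ∈ cthickening δ s ↔ infDist x s ≤ δ := by
  rw [Metric.mem_cthickening_iff]
  rw [Metric.infDist]
  exact ENNReal.le_ofReal_iff_toReal_le (infEdist_ne_top hne) hδ

lemma convex_poly_inter {m k : ℕ} (φ : Fin k → (ESp m →L[ℝ] ℝ)) (c : Fin k → ℝ) (R : ℝ) :
    Convex ℝ {z : ESp m | (∀ i, boxFun m i z ≤ R) ∧ (∀ i, φ i z ≤ c i)} := by
  have h1 : {z : ESp m | (∀ i, boxFun m i z ≤ R) ∧ (∀ i, φ i z ≤ c i)}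
      = (⋂ i, {z | boxFun m i z ≤ R}) ∩ ⋂ i, {z | φ i z ≤ c i} := by
    ext z; simp [Set.mem_iInter]
  rw [h1]
  refine Convex.inter (convex_iInter fun i => ?_) (convex_iInter fun i => ?_)
  · exact convex_halfSpace_le ⟨map_add _, map_smul _⟩ R
  · exact convex_halfSpace_le ⟨map_add _, map_smul _⟩ (c i)

lemma exists_poly_between {m : ℕ} {L U : Set (ESp m)} (hLcomp : IsCompact L)
    (hLconv : Convex ℝ L) (hne : L.Nonempty) (hU : IsOpen U) (hLU : L ⊆ U) :
    ∃ (k : ℕ) (φ : Fin k → (ESp m →L[ℝ] ℝ)) (c : Fin k → ℝ) (R : ℝ),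
      (∀ z ∈ L, (∀ i, boxFun m i z ≤ R) ∧ (∀ i, φ i z ≤ c i)) ∧
      {z : ESp m | (∀ i, boxFun m i z ≤ R) ∧ (∀ i, φ i z ≤ c i)} ⊆ U := by
  obtain ⟨δ, hδ, hth⟩ := hLcomp.exists_thickening_subset_open hU hLU
  set C : Set (ESp m) := cthickening (δ/2) L with hC
  have hCcomp : IsCompact C := hLcomp.cthickening
  have hCU : C ⊆ U := (cthickening_subset_thickening' hδ (by linarith) L).trans hth
  set L₈ : Set (ESp m) := cthickening (δ/8) L with hL8
  have hL8conv : Convex ℝ L₈ := hLconv.cthickening _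
  have hL8closed : IsClosed L₈ := isClosed_cthickening
  set S : Set (ESp m) := C ∩ {x | δ/4 ≤ infDist x L} with hS
  have hScomp : IsCompact S :=
    hCcomp.inter_right (isClosed_Ici.preimage (continuous_infDist_pt L))
  have hsep : ∀ x ∈ S, ∃ (f : ESp m →L[ℝ] ℝ) (u : ℝ), (∀ a ∈ L₈, f a < u) ∧ u < f x := by
    intro x hx
    have hx8 : x ∉ L₈ := by
      rw [hL8, mem_cthick_iff hne (by linarith)]
      push_neg
      have := hx.2
      simp only [mem_setOf_eq] at this
      linarith
    exact geometric_hahn_banach_closed_point hL8conv hL8closed hx8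
  choose! f u hfu hux using hsep
  have hcover : S ⊆ ⋃ x ∈ S, {y | u x < f x y} := by
    intro x hx
    exact Set.mem_biUnion hx (hux x hx)
  obtain ⟨T, hTS, hTfin, hTcover⟩ :=
    hScomp.elim_finite_subcover_image (fun x _ => isOpen_lt continuous_const (f x).continuous)
      hcover
  set F : Finset (ESp m) := hTfin.toFinset with hF
  set k : ℕ := F.card with hk
  set σ : Fin k → ESp m := fun i => (F.equivFin.symm i : ESp m) with hσ
  set φ : Fin k → (ESp m →L[ℝ] ℝ) := fun i => f (σ i) with hφ
  set c : Fin k → ℝ := fun i => u (σ i) with hc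
  obtain ⟨R₀, hR₀⟩ := hCcomp.isBounded.subset_closedBall 0
  set R : ℝ := max R₀ 0 with hR
  refine ⟨k, φ, c, R, ?_, ?_⟩
  · intro z hz
    have hzC : z ∈ C := self_subset_cthickening L hz
    constructor
    · intro i
      have : ‖z‖ ≤ R₀ := by simpa using hR₀ hzC
      exact (boxFun_le_norm z i).trans (this.trans (le_max_left _ _))
    · intro i
      have hzL8 : z ∈ L₈ := self_subset_cthickening L hz
      exact (hfu (σ i) (hTS (by simpa [hσ, hF, hTfin.mem_toFinset] using (F.equivFin.symm i).2)) z hzL8).le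
  · intro w hw
    by_contra hwU
    have hwL : ¬ infDist w L < δ/2 := by
      intro hlt
      exact hwU (hth (by
        rw [mem_thickening_iff_infDist_lt hne]; linarith))
    push_neg at hwL
    obtain ⟨x₀, hx₀⟩ := id hne
    have hPconv := convex_poly_inter φ c R
    have hmemP : ∀ z ∈ L, z ∈ {z : ESp m | (∀ i, boxFun m i z ≤ R) ∧ (∀ i, φ i z ≤ c i)} := by
      intro z hz
      have hzC : z ∈ C := self_subset_cthickening L hz
      constructor
      · intro i
        have : ‖z‖ ≤ R₀ := by simpa using hR₀ hzC
        exact (boxFun_le_norm z i).trans (this.trans (le_max_left _ _))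
      · intro i
        have hzL8 : z ∈ L₈ := self_subset_cthickening L hz
        exact (hfu (σ i) (hTS (by simpa [hσ, hF, hTfin.mem_toFinset] using (F.equivFin.symm i).2)) z hzL8).le
    have hx₀P := hmemP x₀ hx₀
    set γ : ℝ → ESp m := fun t => x₀ + t • (w - x₀) with hγ
    have hγc : ContinuousOn (fun t => infDist (γ t) L) (Icc 0 1) := by
      refine Continuous.continuousOn ?_
      exact (continuous_infDist_pt L).comp
        (continuous_const.add (continuous_id.smul continuous_const))
    have hγ0 : infDist (γ 0) L = 0 := by
      simp only [hγ, zero_smul, add_zero]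
      exact infDist_zero_of_mem hx₀
    have hγ1 : δ/2 ≤ infDist (γ 1) L := by
      simp only [hγ, one_smul]
      simpa using hwL
    have hmid : (3*δ/8) ∈ Icc (infDist (γ 0) L) (infDist (γ 1) L) := by
      rw [hγ0]
      constructor <;> [positivity; linarith]
    obtain ⟨t, ht01, hDy⟩ := intermediate_value_Icc zero_le_one hγc hmid
    have hDy' : infDist (γ t) L = 3*δ/8 := hDy
    set y : ESp m := γ t with hy
    have hyP : y ∈ {z : ESp m | (∀ i, boxFun m i z ≤ R) ∧ (∀ i, φ i z ≤ c i)} :=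
      hPconv.add_smul_sub_mem hx₀P hw ht01
    have hyS : y ∈ S := by
      constructor
      · rw [hC, mem_cthick_iff hne (by positivity)]
        rw [hy, hDy']; linarith
      · simp only [mem_setOf_eq, hy, hDy']; linarith
    have := hTcover hyS
    simp only [Set.mem_iUnion] at this
    obtain ⟨x, hxT, hyx⟩ := this
    have hxF : x ∈ F := by rw [hF, hTfin.mem_toFinset]; exact hxT
    set i : Fin k := F.equivFin ⟨x, hxF⟩ with hi
    have hσi : σ i = x := by rw [hσ, hi]; simp
    have h1 : f (σ i) y ≤ u (σ i) := hyP.2 i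
    rw [hσi] at h1
    simp only [mem_setOf_eq] at hyx
    linarith

/-! ### Recursion infrastructure -/

def GoodSt (m p : ℕ) (Y : Set (ESp p)) (r : ℝ)
    (x : Set (ESp m) × (ESp m → ESp p) × ℝ) : Prop :=
  IsOpen x.1 ∧ Qb m r ⊆ x.1 ∧ DifferentiableOn ℂ x.2.1 x.1 ∧ x.2.1 '' x.1 ⊆ Y ∧
    0 < x.2.2 ∧ ∀ z ∈ Qb m r, ball (x.2.1 z) x.2.2 ⊆ Y

lemma exists_rad {m p : ℕ} {Y : Set (ESp p)} (hYo : IsOpen Y) {W Q : Set (ESp m)}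
    (hQ : IsCompact Q) (hQW : Q ⊆ W) {g : ESp m → ESp p} (hg : ContinuousOn g W)
    (hgY : g '' W ⊆ Y) {ρ₀ : ℝ} (hρ₀ : 0 < ρ₀) :
    ∃ ρ', 0 < ρ' ∧ ρ' ≤ ρ₀ ∧ ∀ z ∈ Q, ball (g z) ρ' ⊆ Y := by
  have hQim : IsCompact (g '' Q) := hQ.image_of_continuousOn (hg.mono hQW)
  have hsubY : g '' Q ⊆ Y := (Set.image_mono hQW : g '' Q ⊆ g '' W).trans hgY
  obtain ⟨r, hr, hrY⟩ := hQim.exists_thickening_subset_open hYo hsubY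
  refine ⟨min ρ₀ r, lt_min hρ₀ hr, min_le_left _ _, ?_⟩
  intro z hz y hy
  refine hrY ?_
  rw [Metric.mem_thickening_iff]
  exact ⟨g z, ⟨z, hz, rfl⟩, lt_of_lt_of_le (mem_ball.mp hy) (min_le_right _ _)⟩

lemma step_exists {m p : ℕ} {Y : Set (ESp p)} (hYo : IsOpen Y) (H : HA m p Y)
    (r ε' : ℝ) (hε' : 0 < ε') {x : Set (ESp m) × (ESp m → ESp p) × ℝ}
    (hx : GoodSt m p Y r x) :
    ∃ y, GoodSt m p Y (r+1) y ∧ y.2.2 ≤ x.2.2/2 ∧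
      ∀ z ∈ Qb m r, ‖y.2.1 z - x.2.1 z‖ ≤ min ε' (x.2.2/4) := by
  obtain ⟨hWo, hQW, hg, hgY, hρ, _hball⟩ := hx
  have hεmin : 0 < min ε' (x.2.2/4) := lt_min hε' (by linarith)
  obtain ⟨W', g', hW'o, hW'sub, hg', hg'Y, herr⟩ :=
    lemA H (4*m) (4*m) (boxFun m) (fun _ => r+1) (boxFun m) (fun _ => r)
      (isCompact_Qb m (r+1)) x.1 hWo (fun z hz => hQW hz.2) x.2.1 hg hgY _ hεmin
  obtain ⟨ρ', hρ'pos, hρ'le, hρ'ball⟩ := exists_rad hYo (isCompact_Qb m (r+1))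
      hW'sub hg'.continuousOn hg'Y (half_pos hρ)
  refine ⟨(W', g', ρ'), ⟨hW'o, hW'sub, hg', hg'Y, hρ'pos, hρ'ball⟩, hρ'le, ?_⟩
  intro z hz
  exact (herr z (fun i => (hz i).trans (by linarith)) hz).le

lemma init_exists {m p : ℕ} {Y : Set (ESp p)} (hYo : IsOpen Y) (H : HA m p Y)
    {L U : Set (ESp m)} (hLcomp : IsCompact L) (hLconv : Convex ℝ L) (hne : L.Nonempty)
    (hU : IsOpen U) (hLU : L ⊆ U) {f : ESp m → ESp p} (hf : DifferentiableOn ℂ f U)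
    (hfY : f '' U ⊆ Y) {ε : ℝ} (hε : 0 < ε) :
    ∃ (R : ℝ) (x : Set (ESp m) × (ESp m → ESp p) × ℝ), GoodSt m p Y R x ∧ L ⊆ Qb m R ∧
      ∀ z ∈ L, ‖x.2.1 z - f z‖ < ε := by
  obtain ⟨k, φ, c, R, hLmem, hPU⟩ := exists_poly_between hLcomp hLconv hne hU hLU
  obtain ⟨W₀, g₀, hW₀o, hW₀sub, hg₀, hg₀Y, herr⟩ :=
    lemA H k (4*m) (boxFun m) (fun _ => R) φ c (isCompact_Qb m R) U hU hPU f hf hfY ε hε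
  obtain ⟨ρ₀, h1, _h2, h3⟩ := exists_rad hYo (isCompact_Qb m R) hW₀sub
    hg₀.continuousOn hg₀Y one_pos
  exact ⟨R, (W₀, g₀, ρ₀), ⟨hW₀o, hW₀sub, hg₀, hg₀Y, h1, h3⟩, fun z hz => (hLmem z hz).1,
    fun z hz => herr z (hLmem z hz).1 (hLmem z hz).2⟩

lemma dep_rec {α : Type*} (P : ℕ → α → Prop) (Rel : ℕ → α → α → Prop) (x₀ : α) (h₀ : P 0 x₀)
    (hstep : ∀ k x, P k x → ∃ y, P (k+1) y ∧ Rel k x y) :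
    ∃ seq : ℕ → α, seq 0 = x₀ ∧ (∀ k, P k (seq k)) ∧ ∀ k, Rel k (seq k) (seq (k+1)) := by
  classical
  let seq : ∀ k : ℕ, {x // P k x} := fun k =>
    Nat.rec ⟨x₀, h₀⟩ (fun k ih => ⟨Classical.choose (hstep k ih.1 ih.2),
      (Classical.choose_spec (hstep k ih.1 ih.2)).1⟩) k
  exact ⟨fun k => (seq k).1, rfl, fun k => (seq k).2,
    fun k => (Classical.choose_spec (hstep k (seq k).1 (seq k).2)).2⟩

/-! ### Small limit helpers -/

lemma tendsto_eps_pow (ε : ℝ) (a : ℕ) :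
    Tendsto (fun j : ℕ => ε/2^(j+a)) atTop (𝓝 0) := by
  have h : Tendsto (fun j : ℕ => (1/2:ℝ)^j) atTop (𝓝 0) :=
    tendsto_pow_atTop_nhds_zero_of_lt_one (by norm_num) (by norm_num)
  have h2 : Tendsto (fun j : ℕ => ε/2^a * (1/2:ℝ)^j) atTop (𝓝 0) := by
    simpa using h.const_mul (ε/2^a)
  refine h2.congr fun j => ?_
  rw [pow_add, one_div_pow, mul_one_div, div_div, mul_comm ((2:ℝ)^a)]

lemma mem_Qb_of_norm {m : ℕ} {z : ESp m} {r : ℝ} (h : ‖z‖ ≤ r) : z ∈ Qb m r :=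
  fun i => (boxFun_le_norm z i).trans h


/-- If holomorphic maps to `Y` can be approximated on each special polyhedral pair
`K ⊆ L` in `ℂ^n` (where `L = {z : ∀ i, φᵢ(z) ≤ cᵢ}` is a compact convex polyhedron and
`K = {z ∈ L : ψ(z) + d ≤ 0}` for a real affine function), then `Y` satisfies CAP. -/
theorem cap_of_special_polyhedral_pairs (p : ℕ) (Y : Set (ESp p))
    (hY : Y.Nonempty) (hYo : IsOpen Y)
    (happrox : ∀ (n : ℕ), 1 ≤ n → ∀ (k : ℕ) (φ : Fin k → (ESp n →L[ℝ] ℝ)) (c : Fin k → ℝ),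
      IsCompact {z : ESp n | ∀ i, φ i z ≤ c i} →
      ∀ (ψ : ESp n →L[ℝ] ℝ) (d : ℝ),
        ∀ U : Set (ESp n), IsOpen U → {z : ESp n | (∀ i, φ i z ≤ c i) ∧ ψ z + d ≤ 0} ⊆ U →
          ∀ f : ESp n → ESp p, DifferentiableOn ℂ f U → f '' U ⊆ Y →
            ∀ ε : ℝ, 0 < ε →
              ∃ (W : Set (ESp n)) (g : ESp n → ESp p),
                IsOpen W ∧ {z : ESp n | ∀ i, φ i z ≤ c i} ⊆ W ∧
                DifferentiableOn ℂ g W ∧ g '' W ⊆ Y ∧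
                ∀ z ∈ {z : ESp n | (∀ i, φ i z ≤ c i) ∧ ψ z + d ≤ 0}, ‖g z - f z‖ < ε) :
    CAP Y := by
  intro m hm L hLcomp hLconv U hU hLU f hf hfY ε hε
  have H : HA m p Y := happrox m hm
  rcases L.eq_empty_or_nonempty with rfl | hne
  · obtain ⟨y₀, hy₀⟩ := hY
    refine ⟨fun _ => y₀, differentiable_const _, ?_, fun z hz => absurd hz (by simp)⟩
    rintro _ ⟨z, rfl⟩; exact hy₀
  obtain ⟨R, x₀, hx₀, hLQ, hx₀err⟩ :=
    init_exists hYo H hLcomp hLconv hne hU hLU hf hfY (half_pos hε)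
  -- the recursively constructed sequence of holomorphic maps on growing cubes
  obtain ⟨seq, hseq0, hgood, hrel⟩ :=
    dep_rec (fun k x => GoodSt m p Y (R + (k:ℝ)) x)
      (fun k x y => y.2.2 ≤ x.2.2/2 ∧
        ∀ z ∈ Qb m (R + (k:ℝ)), ‖y.2.1 z - x.2.1 z‖ ≤ min (ε/2^(k+2)) (x.2.2/4))
      x₀ (by simpa using hx₀)
      (by
        intro k x hx
        obtain ⟨y, hy, h1, h2⟩ := step_exists hYo H (R + (k:ℝ)) (ε/2^(k+2)) (by positivity) hx
        refine ⟨y, ?_, h1, h2⟩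
        have e : R + ((k+1:ℕ):ℝ) = R + (k:ℝ) + 1 := by push_cast; ring
        show GoodSt m p Y (R + ((k+1:ℕ):ℝ)) y
        rw [e]
        exact hy)
  set gk : ℕ → ESp m → ESp p := fun k => (seq k).2.1 with hgk
  set ρk : ℕ → ℝ := fun k => (seq k).2.2 with hρk
  have hρpos : ∀ k, 0 < ρk k := fun k => (hgood k).2.2.2.2.1
  have hQsub : ∀ {k j : ℕ}, k ≤ j → Qb m (R + (k:ℝ)) ⊆ Qb m (R + (j:ℝ)) := by
    intro k j hkj
    exact Qb_mono (by have := (Nat.cast_le (α := ℝ)).mpr hkj; linarith)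
  -- cumulative error bounds
  have cumB : ∀ k j : ℕ, k ≤ j → ∀ z ∈ Qb m (R + (k:ℝ)),
      ‖gk j z - gk k z‖ ≤ ε/2^(k+1) - ε/2^(j+1) := by
    intro k j hkj
    induction j, hkj using Nat.le_induction with
    | base => intro z _; simp
    | succ j hkj ih =>
      intro z hz
      have h1 := ih z hz
      have h2 := ((hrel j).2 z (hQsub hkj hz)).trans (min_le_left _ _)
      have h3 : ‖gk (j+1) z - gk k z‖ ≤ ‖gk (j+1) z - gk j z‖ + ‖gk j z - gk k z‖ :=
        norm_sub_le_norm_sub_add_norm_sub _ _ _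
      have e : ε/2^(j+2) = ε/2^(j+1)/2 := by rw [pow_succ]; ring
      linarith
  have cumA : ∀ k j : ℕ, k ≤ j → ∀ z ∈ Qb m (R + (k:ℝ)),
      ‖gk j z - gk k z‖ ≤ ρk k/2 - ρk j/2 := by
    intro k j hkj
    induction j, hkj using Nat.le_induction with
    | base => intro z _; simp
    | succ j hkj ih =>
      intro z hz
      have h1 := ih z hz
      have h2 := ((hrel j).2 z (hQsub hkj hz)).trans (min_le_right _ _)
      have h3 : ‖gk (j+1) z - gk k z‖ ≤ ‖gk (j+1) z - gk j z‖ + ‖gk j z - gk k z‖ :=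
        norm_sub_le_norm_sub_add_norm_sub _ _ _
      have h4 := (hrel j).1
      linarith
  -- existence of the pointwise limit
  have hex : ∀ z : ESp m, ∃ l, Tendsto (fun j => gk j z) atTop (𝓝 l) := by
    intro z
    obtain ⟨k₀, hk₀⟩ := exists_nat_gt (‖z‖ - R)
    have hzQ : ∀ j, k₀ ≤ j → z ∈ Qb m (R + (j:ℝ)) := by
      intro j hj
      refine mem_Qb_of_norm ?_
      have : (k₀:ℝ) ≤ j := Nat.cast_le.mpr hj
      linarith
    have hcs : CauchySeq (fun j => gk (j + k₀) z) := by
      refine cauchySeq_of_le_tendsto_0 (fun N => ε/2^(N+k₀)) ?_ (tendsto_eps_pow ε k₀)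
      intro a b N ha hb
      have hza : z ∈ Qb m (R + ((N+k₀:ℕ):ℝ)) := hzQ _ (Nat.le_add_left _ _)
      have e1 : ‖gk (a+k₀) z - gk (N+k₀) z‖ ≤ ε/2^(N+k₀+1) - ε/2^(a+k₀+1) :=
        cumB (N+k₀) (a+k₀) (by omega) z hza
      have e2 : ‖gk (b+k₀) z - gk (N+k₀) z‖ ≤ ε/2^(N+k₀+1) - ε/2^(b+k₀+1) :=
        cumB (N+k₀) (b+k₀) (by omega) z hza
      have e3 : dist (gk (a+k₀) z) (gk (b+k₀) z) ≤
          ‖gk (a+k₀) z - gk (N+k₀) z‖ + ‖gk (b+k₀) z - gk (N+k₀) z‖ := by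
        simpa [dist_eq_norm] using dist_triangle_right (gk (a+k₀) z) (gk (b+k₀) z) (gk (N+k₀) z)
      have e4 : ε/2^(N+k₀) = ε/2^(N+k₀+1) + ε/2^(N+k₀+1) := by rw [pow_succ]; ring
      have e5 : (0:ℝ) ≤ ε/2^(a+k₀+1) := by positivity
      have e6 : (0:ℝ) ≤ ε/2^(b+k₀+1) := by positivity
      linarith
    obtain ⟨l, hl⟩ := cauchySeq_tendsto_of_complete hcs
    exact ⟨l, (tendsto_add_atTop_iff_nat k₀).mp hl⟩
  classical
  set F : ESp m → ESp p := fun z => Classical.choose (hex z) with hFdef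
  have hF : ∀ z, Tendsto (fun j => gk j z) atTop (𝓝 (F z)) :=
    fun z => Classical.choose_spec (hex z)
  -- distance from the limit to stage K
  have hFbB : ∀ (K : ℕ) z, z ∈ Qb m (R + (K:ℝ)) → ‖F z - gk K z‖ ≤ ε/2^(K+1) := by
    intro K z hz
    refine le_of_tendsto (((hF z).sub tendsto_const_nhds).norm) ?_
    refine eventually_atTop.mpr ⟨K, fun j hj => ?_⟩
    have := cumB K j hj z hz
    have : ‖gk j z - gk K z‖ ≤ ε/2^(K+1) - ε/2^(j+1) := this
    have h5 : (0:ℝ) ≤ ε/2^(j+1) := by positivity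
    linarith
  have hFbA : ∀ (K : ℕ) z, z ∈ Qb m (R + (K:ℝ)) → ‖F z - gk K z‖ ≤ ρk K/2 := by
    intro K z hz
    refine le_of_tendsto (((hF z).sub tendsto_const_nhds).norm) ?_
    refine eventually_atTop.mpr ⟨K, fun j hj => ?_⟩
    have h1 := cumA K j hj z hz
    have h2 := (hρpos j).le
    linarith
  refine ⟨F, ?_, ?_, ?_⟩
  · -- differentiability
    intro z₀
    obtain ⟨k₀, hk₀⟩ := exists_nat_gt (‖z₀‖ + 1 - R)
    set V : Set (ESp m) := {z : ESp m | ∀ i, boxFun m i z < R + (k₀:ℝ)} with hV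
    have hVo : IsOpen V := by
      have : V = ⋂ i, (boxFun m i) ⁻¹' Iio (R + (k₀:ℝ)) := by
        ext z; simp [hV, Set.mem_iInter]
      rw [this]
      exact isOpen_iInter_of_finite fun i => isOpen_Iio.preimage (boxFun m i).continuous
    have hVQ : V ⊆ Qb m (R + (k₀:ℝ)) := fun z hz i => (hz i).le
    have hcb : closedBall z₀ (2*(1/4:ℝ)) ⊆ V := by
      intro w hw
      intro i
      have h1 : ‖w - z₀‖ ≤ 1/2 := by
        rw [mem_closedBall, dist_eq_norm] at hw
        linarith
      have h2 : ‖w‖ ≤ ‖z₀‖ + ‖w - z₀‖ := by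
        calc ‖w‖ = ‖z₀ + (w - z₀)‖ := by rw [add_sub_cancel]
        _ ≤ ‖z₀‖ + ‖w - z₀‖ := norm_add_le _ _
      have := boxFun_le_norm w i
      linarith
    have hd : ∀ j : ℕ, DifferentiableOn ℂ (gk (j + k₀)) V := by
      intro j
      refine ((hgood (j+k₀)).2.2.1).mono ?_
      refine subset_trans (subset_trans hVQ (hQsub (Nat.le_add_left _ _))) (hgood (j+k₀)).2.1
    have hFu : TendstoUniformlyOn (fun j => gk (j + k₀)) F atTop V := by
      rw [Metric.tendstoUniformlyOn_iff]
      intro δ hδ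
      have hb := tendsto_eps_pow ε (k₀+1)
      filter_upwards [hb.eventually (gt_mem_nhds hδ)] with j hj z hz
      have hzQ : z ∈ Qb m (R + ((j+k₀:ℕ):ℝ)) := hQsub (Nat.le_add_left _ _) (hVQ hz)
      have h1 := hFbB (j+k₀) z hzQ
      rw [dist_eq_norm]
      have e : ε/2^(j+k₀+1) = ε/2^(j+(k₀+1)) := by ring_nf
      calc ‖F z - gk (j+k₀) z‖ ≤ ε/2^(j+k₀+1) := h1
        _ < δ := by rw [e]; exact hj
    exact differentiableAt_of_uniform_limit hVo hd hFu (by norm_num : (0:ℝ) < 1/4) hcb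
  · -- range in Y
    rintro _ ⟨z, rfl⟩
    obtain ⟨k₀, hk₀⟩ := exists_nat_gt (‖z‖ - R)
    have hzQ : z ∈ Qb m (R + (k₀:ℝ)) := by
      refine mem_Qb_of_norm ?_
      linarith
    have h1 := hFbA k₀ z hzQ
    refine (hgood k₀).2.2.2.2.2 z hzQ ?_
    rw [mem_ball, dist_eq_norm]
    have := hρpos k₀
    linarith
  · -- approximation on L
    intro z hz
    have hzQ : z ∈ Qb m (R + ((0:ℕ):ℝ)) := by
      have := hLQ hz
      intro i
      have := this i
      simp only [Nat.cast_zero, add_zero]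
      linarith
    have h1 := hFbB 0 z hzQ
    have h2 : ‖gk 0 z - f z‖ < ε/2 := by
      show ‖(seq 0).2.1 z - f z‖ < ε/2
      rw [hseq0]
      exact hx₀err z hz
    have h3 : ‖F z - f z‖ ≤ ‖F z - gk 0 z‖ + ‖gk 0 z - f z‖ :=
      norm_sub_le_norm_sub_add_norm_sub _ _ _
    have e : ε/2^(0+1) = ε/2 := by norm_num
    linarith
end
end

section
/- Let n ≥ 2 and k ≥ 1, let f₁,…,f_k : ℂ^{n−1} → ℂ be holomorphic (e.g., polynomial) functions, and let E ⊆ ℂ^{n−1} × ℂ be a closed set whose one-dimensional Hausdorff measure is σ-finite (e.g., E is contained in the union of a compact connected set of finite length and a countable set). Suppose that E contains no point of the form (z′, 0) with f₁(z′) = ⋯ = f_k(z′) = 0. Then the set of parameters t = (t₁,…,t_k) ∈ ℂ^k such that the image of the map ψ_t : ℂ^{n−1} → ℂ^{n−1} × ℂ, ψ_t(z′) = (z′, Σ_{j=1}^k t_j f_j(z′)), is disjoint from E, is dense in ℂ^k. -/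
open Set MeasureTheory

noncomputable section

instance (n : ℕ) : MeasurableSpace (ESp n) := borel _
instance (n : ℕ) : BorelSpace (ESp n) := ⟨rfl⟩

open Metric in
/-- A function that is complex-differentiable on an open set is Lipschitz
on a ball around every point of that set.  Proved via the one-variable Schwarz
lemma applied on complex lines (this avoids Hartogs-type theory). -/
lemma diffOn_exists_lipschitz_ball {F : Type*} [NormedAddCommGroup F] [NormedSpace ℂ F]
    {f : F → ℂ} {U : Set F} (hU : IsOpen U) (hf : DifferentiableOn ℂ f U) {x₀ : F}
    (hx₀ : x₀ ∈ U) :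
    ∃ K : NNReal, ∃ r : ℝ, 0 < r ∧ LipschitzOnWith K f (Metric.ball x₀ r) := by
  obtain ⟨δ, hδ0, hδU, hδ⟩ : ∃ δ > 0, ball x₀ δ ⊆ U ∧ ∀ x ∈ ball x₀ δ, f x ∈ ball (f x₀) 1 := by
    obtain ⟨δ₁, hδ₁0, hδ₁⟩ := Metric.isOpen_iff.1 hU x₀ hx₀
    have hc : ContinuousAt f x₀ := (hf.continuousOn.continuousAt (hU.mem_nhds hx₀))
    have := hc.preimage_mem_nhds (Metric.ball_mem_nhds (f x₀) one_pos)
    rcases Metric.mem_nhds_iff.1 this with ⟨δ₂, hδ₂0, hδ₂⟩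
    refine ⟨min δ₁ δ₂, lt_min hδ₁0 hδ₂0, ?_, fun x hx => hδ₂ (ball_subset_ball (min_le_right _ _) hx)⟩
    exact (ball_subset_ball (min_le_left _ _)).trans hδ₁
  refine ⟨Real.toNNReal (4 / δ), δ/4, by positivity, ?_⟩
  rw [lipschitzOnWith_iff_dist_le_mul]
  intro y hy x hx
  rcases eq_or_ne y x with rfl | hne
  · simp
  set v : F := y - x with hv
  have hvne : v ≠ 0 := sub_ne_zero.2 hne
  have hvpos : 0 < ‖v‖ := norm_pos_iff.2 hvne
  have hvlt : ‖v‖ < δ/2 := by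
    have h1 : dist y x₀ < δ/4 := mem_ball.1 hy
    have h2 : dist x x₀ < δ/4 := mem_ball.1 hx
    calc ‖v‖ = dist y x := by rw [dist_eq_norm]
    _ ≤ dist y x₀ + dist x x₀ := dist_triangle_right _ _ _
    _ < δ/4 + δ/4 := by gcongr
    _ = δ/2 := by ring
  set R : ℝ := δ / (2 * ‖v‖) with hR
  have hR1 : 1 < R := by
    rw [hR, lt_div_iff₀ (by positivity)]
    linarith
  set φ : ℂ → ℂ := fun ζ => f (x + ζ • v) with hφ
  have hlin : ∀ ζ : ℂ, ζ ∈ ball (0:ℂ) R → x + ζ • v ∈ ball x₀ δ := by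
    intro ζ hζ
    have hζR : ‖ζ‖ < R := by simpa [dist_eq_norm] using hζ
    rw [mem_ball, dist_eq_norm]
    calc ‖x + ζ • v - x₀‖ ≤ ‖x - x₀‖ + ‖ζ • v‖ := by
          have h : x + ζ • v - x₀ = (x - x₀) + ζ • v := by abel
          rw [h]; exact norm_add_le _ _
    _ < δ/4 + δ/2 := by
          apply add_lt_add
          · simpa [dist_eq_norm] using hx
          · rw [norm_smul]
            calc ‖ζ‖ * ‖v‖ < R * ‖v‖ := by gcongr
            _ = δ/2 := by rw [hR, div_mul_eq_mul_div, mul_comm 2 ‖v‖, ← div_div, mul_div_cancel_right₀ _ hvpos.ne']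
    _ < δ := by linarith
  have hφd : DifferentiableOn ℂ φ (ball (0:ℂ) R) := by
    apply hf.comp
    · exact (((differentiable_const x).add ((differentiable_id).smul_const v))).differentiableOn
    · intro ζ hζ
      exact hδU (hlin ζ hζ)
  have hmaps : MapsTo φ (ball (0:ℂ) R) (ball (φ 0) 2) := by
    intro ζ hζ
    have h0 : x + (0:ℂ) • v ∈ ball x₀ δ := by
      simpa using (mem_ball.1 hx).trans_le (by linarith)
    have h1 := hδ _ (hlin ζ hζ)
    have h0' := hδ _ h0
    rw [mem_ball] at h1 h0' ⊢
    calc dist (φ ζ) (φ 0) ≤ dist (φ ζ) (f x₀) + dist (f x₀) (φ 0) := dist_triangle _ _ _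
    _ < 1 + 1 := add_lt_add h1 (by rw [dist_comm]; exact h0')
    _ = 2 := by norm_num
  have h1mem : (1:ℂ) ∈ ball (0:ℂ) R := by
    simpa [dist_eq_norm] using hR1
  have key := Complex.dist_le_div_mul_dist_of_mapsTo_ball hφd (hmaps.mono_right Metric.ball_subset_closedBall) h1mem
  have hφ1 : φ 1 = f y := by simp [hφ, hv]
  have hφ0 : φ 0 = f x := by simp [hφ]
  rw [hφ1, hφ0] at key
  have hd10 : dist (1:ℂ) (0:ℂ) = 1 := by simp
  rw [hd10, mul_one] at key
  calc dist (f y) (f x) ≤ 2 / R := key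
  _ = (4/δ) * ‖v‖ := by rw [hR]; field_simp; ring
  _ = (Real.toNNReal (4/δ) : ℝ) * dist y x := by
      rw [Real.coe_toNNReal _ (by positivity), dist_eq_norm]

/-- Lebesgue measure on `ℂ` is absolutely continuous w.r.t. `μH[2]`. -/
lemma volume_ac_hausdorff_two : (volume : Measure ℂ) ≪ (μH[2] : Measure ℂ) := by
  have h := MeasureTheory.isAddHaarMeasure_hausdorffMeasure (E := ℂ)
  rw [Complex.finrank_real_complex] at h
  have h2 : ((2:ℕ):ℝ) = (2:ℝ) := by norm_num
  rw [h2] at h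
  exact MeasureTheory.Measure.absolutelyContinuous_isAddHaarMeasure volume _

/-- Core step: the projection to parameter space of a compact set of "bad" pairs
is Lebesgue-null. -/
lemma piece_null (m k' : ℕ) {f : Fin (k'+1) → ESp m → ℂ} (hf : ∀ j, Differentiable ℂ (f j))
    {E : Set (ESp m × ℂ)} (hdim : dimH E ≤ 1) (j : Fin (k'+1))
    {C : Set ((Fin (k'+1) → ℂ) × ESp m)} (hC : IsCompact C)
    (hCsub : ∀ q ∈ C, f j q.2 ≠ 0 ∧ (q.2, ∑ i, q.1 i * f i q.2) ∈ E) :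
    volume (Prod.fst '' C) = 0 := by
  classical
  set D : Set (Fin (k'+1) → ℂ) := Prod.fst '' C with hD
  have hDc : IsCompact D := hC.image continuous_fst
  have hDm : MeasurableSet D := hDc.isClosed.measurableSet
  -- the measurable equivalence moving coordinate j to the second factor
  set e : (Fin (k'+1) → ℂ) ≃ᵐ ((Fin k' → ℂ) × ℂ) :=
    (MeasurableEquiv.piFinSuccAbove (fun _ => ℂ) j).trans MeasurableEquiv.prodComm with he
  set A : Set ((Fin k' → ℂ) × ℂ) := ⇑e '' D with hA
  have hAm : MeasurableSet A := by
    have : A = ⇑e.symm ⁻¹' D := by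
      rw [hA]; exact Equiv.image_eq_preimage_symm e.toEquiv D
    rw [this]
    exact e.symm.measurable hDm
  have hpres : MeasurePreserving (⇑e) volume
      ((volume : Measure (Fin k' → ℂ)).prod (volume : Measure ℂ)) := by
    have h1 := MeasureTheory.volume_preserving_piFinSuccAbove (fun _ : Fin (k'+1) => ℂ) j
    have h2 : MeasurePreserving (Prod.swap : ℂ × (Fin k' → ℂ) → (Fin k' → ℂ) × ℂ)
        ((volume : Measure ℂ).prod (volume : Measure (Fin k' → ℂ)))
        ((volume : Measure (Fin k' → ℂ)).prod (volume : Measure ℂ)) :=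
      Measure.measurePreserving_swap
    exact h2.comp h1
  have hvolD : volume D = ((volume : Measure (Fin k' → ℂ)).prod (volume : Measure ℂ)) A := by
    have hDA : D = ⇑e ⁻¹' A := by
      rw [hA]; exact (Equiv.preimage_image e.toEquiv D).symm
    rw [hDA]
    exact hpres.measure_preimage hAm.nullMeasurableSet
  -- the set C' of "bad points" in E
  set C' : Set (ESp m × ℂ) := (fun q : (Fin (k'+1) → ℂ) × ESp m =>
      (q.2, ∑ i, q.1 i * f i q.2)) '' C with hC'
  have hC'E : C' ⊆ E := by
    rintro p ⟨q, hq, rfl⟩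
    exact (hCsub q hq).2
  have hC'U : ∀ p ∈ C', f j p.1 ≠ 0 := by
    rintro p ⟨q, hq, rfl⟩
    exact (hCsub q hq).1
  -- slices are null
  have hslice : ∀ b : Fin k' → ℂ, (volume : Measure ℂ) (Prod.mk b ⁻¹' A) = 0 := by
    intro b
    set U : Set (ESp m × ℂ) := {p | f j p.1 ≠ 0} with hU
    have hUopen : IsOpen U := by
      have : Continuous fun p : ESp m × ℂ => f j p.1 := (hf j).continuous.comp continuous_fst
      exact isOpen_compl_singleton.preimage this
    set g : ESp m × ℂ → ℂ :=
      fun p => (p.2 - ∑ i : Fin k', b i * f (j.succAbove i) p.1) / f j p.1 with hg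
    have hgdiff : DifferentiableOn ℂ g U := by
      rw [hg]
      simp only [div_eq_mul_inv]
      intro p hp
      have num : DifferentiableAt ℂ
          (fun p : ESp m × ℂ => p.2 - ∑ i : Fin k', b i * f (j.succAbove i) p.1) p := by
        apply DifferentiableAt.sub differentiableAt_snd
        apply DifferentiableAt.fun_sum
        intro i _
        exact (differentiableAt_const (b i)).mul ((hf (j.succAbove i) p.1).comp p
          differentiableAt_fst)
      have den : DifferentiableAt ℂ (fun p : ESp m × ℂ => f j p.1) p :=
        (hf j p.1).comp p differentiableAt_fst
      exact (num.mul (den.inv hp)).differentiableWithinAt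
    -- the slice is contained in g '' C'
    have hsub : Prod.mk b ⁻¹' A ⊆ g '' C' := by
      intro a ha
      have hmem : (b, a) ∈ ⇑e '' D := ha
      obtain ⟨t, htD, hte⟩ := hmem
      have ht : t = Fin.insertNth j a b := by
        have : t = e.symm (b, a) := by
          rw [← hte]; exact (e.toEquiv.symm_apply_apply t).symm
        rw [this]
        rfl
      obtain ⟨q, hq, hq1⟩ := htD
      refine ⟨(q.2, ∑ i, q.1 i * f i q.2), ⟨q, hq, rfl⟩, ?_⟩
      have hfj : f j q.2 ≠ 0 := (hCsub q hq).1
      have hgen : ∀ s : Fin (k'+1) → ℂ, ∑ i, s i * f i q.2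
          = s j * f j q.2 + ∑ i : Fin k', s (j.succAbove i) * f (j.succAbove i) q.2 :=
        fun s => Fin.sum_univ_succAbove (fun i => s i * f i q.2) j
      have hsum : ∑ i, q.1 i * f i q.2
          = a * f j q.2 + ∑ i : Fin k', b i * f (j.succAbove i) q.2 := by
        rw [hq1, ht, hgen (Fin.insertNth j a b)]
        simp [Fin.insertNth_apply_same, Fin.insertNth_apply_succAbove]
      show g (q.2, ∑ i, q.1 i * f i q.2) = a
      rw [hg]
      simp only
      rw [hsum, add_sub_cancel_right]
      exact mul_div_cancel_right₀ a hfj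
    -- dimension bound
    have hdims : dimH (g '' C') ≤ 1 := by
      have h1 : dimH (g '' C') ≤ dimH C' := by
        apply dimH_image_le_of_locally_lipschitzOn
        intro x hx
        obtain ⟨K, r, hr, hlip⟩ := diffOn_exists_lipschitz_ball hUopen hgdiff (hC'U x hx)
        exact ⟨K, Metric.ball x r, nhdsWithin_le_nhds (Metric.ball_mem_nhds x hr),
          hlip⟩
      exact h1.trans ((dimH_mono hC'E).trans hdim)
    apply measure_mono_null hsub
    apply measure_zero_of_dimH_lt (d := 2) ?_ ?_
    · have h2 : (((2:NNReal)):ℝ) = (2:ℝ) := by norm_num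
      rw [h2]
      exact volume_ac_hausdorff_two
    · refine lt_of_le_of_lt hdims ?_
      norm_num
  rw [hvolD, Measure.prod_apply hAm]
  simp only [hslice]
  simp

/-- Transversality off a thin set: if `E ⊆ ℂ^{m} × ℂ` is closed with σ-finite
one-dimensional Hausdorff measure and contains no point `(z′,0)` with
`f₁(z′) = ⋯ = f_k(z′) = 0`, then the parameters `t ∈ ℂ^k` for which the graph
`z′ ↦ (z′, Σ_j t_j f_j(z′))` avoids `E` are dense in `ℂ^k`. -/
theorem dense_parameters_avoiding_thin_set (m k : ℕ) (hm : 1 ≤ m) (hk : 1 ≤ k)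
    (f : Fin k → (ESp m → ℂ)) (hf : ∀ j, Differentiable ℂ (f j))
    (E : Set (ESp m × ℂ)) (hEcl : IsClosed E)
    (hEσ : ∃ T : ℕ → Set (ESp m × ℂ), E = ⋃ i, T i ∧
      ∀ i, MeasureTheory.Measure.hausdorffMeasure 1 (T i) < ⊤)
    (hE0 : ∀ z' : ESp m, (∀ j, f j z' = 0) → (z', (0:ℂ)) ∉ E) :
    Dense {t : ESp k | ∀ z' : ESp m, (z', ∑ j, t j * f j z') ∉ E} := by
  obtain ⟨k', rfl⟩ : ∃ k', k = k' + 1 := ⟨k - 1, (Nat.succ_pred_eq_of_pos hk).symm⟩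
  obtain ⟨T, hTE, hT⟩ := hEσ
  -- E has Hausdorff dimension at most 1
  have hdim : dimH E ≤ 1 := by
    rw [hTE, dimH_iUnion]
    refine iSup_le fun i => ?_
    have h1 := dimH_le_of_hausdorffMeasure_ne_top (s := T i) (d := 1) (by
      simpa using (hT i).ne)
    simpa using h1
  -- compact pieces of bad pairs
  set C : Fin (k'+1) → ℕ → Set ((Fin (k'+1) → ℂ) × ESp m) := fun j n =>
    {q | ((n:ℝ)+1)⁻¹ ≤ ‖f j q.2‖ ∧ ‖q.1‖ ≤ (n:ℝ) ∧ ‖q.2‖ ≤ (n:ℝ) ∧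
      (q.2, ∑ i, q.1 i * f i q.2) ∈ E} with hCdef
  have hsumcont : Continuous fun q : (Fin (k'+1) → ℂ) × ESp m => ∑ i, q.1 i * f i q.2 :=
    continuous_finset_sum _ fun i _ =>
      ((continuous_apply i).comp continuous_fst).mul ((hf i).continuous.comp continuous_snd)
  have hCcompact : ∀ j n, IsCompact (C j n) := by
    intro j n
    have hclosed : IsClosed (C j n) := by
      have h1 : IsClosed {q : (Fin (k'+1) → ℂ) × ESp m | ((n:ℝ)+1)⁻¹ ≤ ‖f j q.2‖} :=
        isClosed_le continuous_const ((hf j).continuous.comp continuous_snd).norm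
      have h2 : IsClosed {q : (Fin (k'+1) → ℂ) × ESp m | ‖q.1‖ ≤ (n:ℝ)} :=
        isClosed_le continuous_fst.norm continuous_const
      have h3 : IsClosed {q : (Fin (k'+1) → ℂ) × ESp m | ‖q.2‖ ≤ (n:ℝ)} :=
        isClosed_le continuous_snd.norm continuous_const
      have h4 : IsClosed {q : (Fin (k'+1) → ℂ) × ESp m |
          (q.2, ∑ i, q.1 i * f i q.2) ∈ E} :=
        hEcl.preimage (continuous_snd.prodMk hsumcont)
      exact (h1.inter (h2.inter (h3.inter h4)))
    have hbdd : Bornology.IsBounded (C j n) := by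
      apply (Metric.isBounded_closedBall (x := (0 : (Fin (k'+1) → ℂ) × ESp m))
        (r := (n:ℝ))).subset
      intro q hq
      rw [Metric.mem_closedBall, dist_zero_right]
      rw [Prod.norm_def]
      exact max_le hq.2.1 hq.2.2.1
    exact Metric.isCompact_of_isClosed_isBounded hclosed hbdd
  have hCnull : ∀ j n, volume (Prod.fst '' C j n) = 0 := by
    intro j n
    apply piece_null m k' hf hdim j (hCcompact j n)
    intro q hq
    obtain ⟨hq1, hq2, hq3, hq4⟩ := hq
    refine ⟨?_, hq4⟩
    have h0 : (0:ℝ) < ((n:ℝ)+1)⁻¹ := by positivity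
    intro hzero
    rw [hzero] at hq1
    simp at hq1
    linarith
  -- the bad set is null
  set B : Set (Fin (k'+1) → ℂ) := {t | ∃ z' : ESp m, (z', ∑ i, t i * f i z') ∈ E} with hB
  have hBsub : B ⊆ ⋃ j, ⋃ n, Prod.fst '' C j n := by
    rintro t ⟨z', hz'⟩
    -- some f j z' is nonzero
    obtain ⟨j, hj⟩ : ∃ j, f j z' ≠ 0 := by
      by_contra h
      push_neg at h
      have hzero : ∑ i, t i * f i z' = 0 :=
        Finset.sum_eq_zero fun i _ => by rw [h i, mul_zero]
      rw [hzero] at hz'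
      exact hE0 z' h hz'
    have hfpos : 0 < ‖f j z'‖ := norm_pos_iff.2 hj
    obtain ⟨n₁, hn₁⟩ := exists_nat_ge ‖t‖
    obtain ⟨n₂, hn₂⟩ := exists_nat_ge ‖z'‖
    obtain ⟨n₃, hn₃⟩ := exists_nat_gt (‖f j z'‖⁻¹)
    set n : ℕ := n₁ + n₂ + n₃ with hn
    have hc1 : (0:ℝ) ≤ n₁ := Nat.cast_nonneg n₁
    have hc2 : (0:ℝ) ≤ n₂ := Nat.cast_nonneg n₂
    have hc3 : (0:ℝ) ≤ n₃ := Nat.cast_nonneg n₃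
    have hcast : (n₁:ℝ) ≤ n ∧ (n₂:ℝ) ≤ n ∧ (n₃:ℝ) ≤ n := by
      refine ⟨?_, ?_, ?_⟩ <;> simp only [hn] <;> push_cast <;> linarith
    refine mem_iUnion.2 ⟨j, mem_iUnion.2 ⟨n, ⟨(t, z'), ?_, rfl⟩⟩⟩
    refine ⟨?_, hn₁.trans hcast.1, hn₂.trans hcast.2.1, hz'⟩
    -- the inverse bound
    have hlt : ‖f j z'‖⁻¹ < (n:ℝ) + 1 := by
      calc ‖f j z'‖⁻¹ < (n₃:ℝ) := hn₃
      _ ≤ (n:ℝ) := hcast.2.2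
      _ < (n:ℝ) + 1 := by linarith
    calc ((n:ℝ)+1)⁻¹ ≤ (‖f j z'‖⁻¹)⁻¹ := by
          apply inv_anti₀ (by positivity) hlt.le
    _ = ‖f j z'‖ := inv_inv _
  have hBnull : volume B = 0 := by
    apply measure_mono_null hBsub
    exact measure_iUnion_null fun j => measure_iUnion_null fun n => hCnull j n
  -- density of the complement
  have hdense : Dense {t : Fin (k'+1) → ℂ | ∀ z' : ESp m, (z', ∑ i, t i * f i z') ∉ E} := by
    rw [dense_iff_inter_open]
    intro U hU hUne
    by_contra hcon
    rw [not_nonempty_iff_eq_empty] at hcon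
    have hUB : U ⊆ B := by
      intro t ht
      by_contra htB
      have : t ∈ U ∩ {t : Fin (k'+1) → ℂ | ∀ z' : ESp m, (z', ∑ i, t i * f i z') ∉ E} := by
        refine ⟨ht, fun z' hz' => htB ⟨z', hz'⟩⟩
      rw [hcon] at this
      exact this
    have hpos : 0 < volume U := hU.measure_pos volume hUne
    have : volume U = 0 := measure_mono_null hUB hBnull
    rw [this] at hpos
    exact lt_irrefl _ hpos
  exact hdense.preimage (EuclideanSpace.equiv (Fin (k'+1)) ℂ).toHomeomorph.isOpenMap
end
end
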